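/- Let G be a finite simple graph without isolated vertices with m edges and minimum degree δ, and let a > 0 be a real number. Then ISD_a(G) + M_1^{a+1}(G) ≥ (2δ^a + 1/(2δ^a))·m, and equality holds if and only if G is regular. -/

import Mathlib

open Finset Real

/-- The variable inverse sum deg index
`ISD_a(G) = Σ_{uv ∈ E(G)} 1/(d_u^a + d_v^a)`. -/
noncomputable def ISD {V : Type*} [Fintype V] [DecidableEq V] (G : SimpleGraph V)
    [DecidableRel G.Adj] (a : ℝ) : ℝ :=
  ∑ e ∈ G.edgeFinset,
    Sym2.lift ⟨fun u v => 1 / ((G.degree u : ℝ) ^ a + (G.degree v : ℝ) ^ a),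
      fun u v => by simp [add_comm]⟩ e

/-- The variable first Zagreb index `M₁^α(G) = Σ_{u ∈ V(G)} d_u^α`. -/
noncomputable def varZagreb1 {V : Type*} [Fintype V] (G : SimpleGraph V)
    [DecidableRel G.Adj] (α : ℝ) : ℝ :=
  ∑ u : V, (G.degree u : ℝ) ^ α

/-- Weighted handshake: summing `f u + f v` over edges equals `∑ v, deg v * f v`. -/
lemma edge_sum_add {V : Type*} [Fintype V] [DecidableEq V] (G : SimpleGraph V)
    [DecidableRel G.Adj] (f : V → ℝ) :
    ∑ e ∈ G.edgeFinset, Sym2.lift ⟨fun u v => f u + f v, fun u v => by simp [add_comm]⟩ e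
      = ∑ v, (G.degree v : ℝ) * f v := by
  have h1 : ∑ d : G.Dart, f d.fst = ∑ v, (G.degree v : ℝ) * f v := by
    have hfw := Finset.sum_fiberwise_of_maps_to (s := (Finset.univ : Finset G.Dart))
      (t := (Finset.univ : Finset V)) (g := fun d : G.Dart => d.fst)
      (fun d _ => Finset.mem_univ d.fst) (fun d => f d.fst)
    rw [← hfw]
    refine Finset.sum_congr rfl fun v _ => ?_
    have hc : ∑ d ∈ Finset.filter (fun d : G.Dart => d.fst = v) Finset.univ, f d.fst
        = ∑ _d ∈ Finset.filter (fun d : G.Dart => d.fst = v) Finset.univ, f v :=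
      Finset.sum_congr rfl fun d hd => by rw [(Finset.mem_filter.mp hd).2]
    rw [hc, Finset.sum_const, G.dart_fst_fiber_card_eq_degree v, nsmul_eq_mul]
  have h2 : ∑ d : G.Dart, f d.fst
      = ∑ e ∈ G.edgeFinset,
          Sym2.lift ⟨fun u v => f u + f v, fun u v => by simp [add_comm]⟩ e := by
    have hfw := Finset.sum_fiberwise_of_maps_to (s := (Finset.univ : Finset G.Dart))
      (t := G.edgeFinset) (g := fun d : G.Dart => d.edge)
      (fun d _ => by rw [SimpleGraph.mem_edgeFinset]; exact d.edge_mem) (fun d => f d.fst)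
    rw [← hfw]
    refine Finset.sum_congr rfl fun e he => ?_
    rw [SimpleGraph.mem_edgeFinset] at he
    induction e with
    | _ u v =>
      let d : G.Dart := ⟨(u, v), he⟩
      have hfib : Finset.filter (fun d' : G.Dart => d'.edge = s(u, v)) Finset.univ
          = {d, d.symm} := d.edge_fiber
      rw [hfib, Finset.sum_insert (by simp [Finset.mem_singleton]; exact d.symm_ne.symm),
        Finset.sum_singleton]
      rfl
  rw [← h1, h2]

lemma xinv_mono {c x : ℝ} (hc : 1 < c) (hx : c ≤ x) :
    c + 1 / c ≤ x + 1 / x ∧ (x + 1 / x = c + 1 / c ↔ x = c) := by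
  have hc0 : 0 < c := by linarith
  have hx0 : 0 < x := by linarith
  constructor
  · rw [← sub_nonneg]
    have hrw : x + 1 / x - (c + 1 / c) = (x - c) * (x * c - 1) / (x * c) := by
      field_simp; ring
    rw [hrw]
    apply div_nonneg _ (by positivity)
    exact mul_nonneg (by linarith) (by nlinarith)
  · constructor
    · intro h
      have : (x - c) * (x * c - 1) = 0 := by
        field_simp at h
        nlinarith
      rcases mul_eq_zero.mp this with h' | h'
      · linarith
      · nlinarith
    · rintro rfl; rfl

theorem stmt_15 {V : Type*} [Fintype V] [DecidableEq V] [Nonempty V] (G : SimpleGraph V)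
    [DecidableRel G.Adj] (hiso : ∀ v : V, 0 < G.degree v) (a : ℝ) (ha : 0 < a) :
    (((2 * (G.minDegree : ℝ) ^ a + 1 / (2 * (G.minDegree : ℝ) ^ a)) * (G.edgeFinset.card : ℝ) ≤
      ISD G a + varZagreb1 G (a + 1)) ∧
    (ISD G a + varZagreb1 G (a + 1) =
        (2 * (G.minDegree : ℝ) ^ a + 1 / (2 * (G.minDegree : ℝ) ^ a)) * (G.edgeFinset.card : ℝ) ↔
      ∃ k, ∀ v : V, G.degree v = k)) := by
  classical
  -- basic facts about the minimum degree
  obtain ⟨v₀, hv₀⟩ := G.exists_minimal_degree_vertex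
  have hδpos : 0 < G.minDegree := hv₀ ▸ hiso v₀
  have hδ1 : (1 : ℝ) ≤ (G.minDegree : ℝ) := by exact_mod_cast hδpos
  have hδa1 : (1 : ℝ) ≤ (G.minDegree : ℝ) ^ a :=
    Real.one_le_rpow hδ1 ha.le
  set c : ℝ := 2 * (G.minDegree : ℝ) ^ a with hc
  have hc1 : 1 < c := by simp only [hc]; linarith
  -- degrees dominate minDegree after rpow
  have hdeg : ∀ u : V, c ≤ (G.degree u : ℝ) ^ a + (G.degree u : ℝ) ^ a →
      True := fun _ _ => trivial
  have hda : ∀ u : V, (G.minDegree : ℝ) ^ a ≤ (G.degree u : ℝ) ^ a := fun u =>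
    Real.rpow_le_rpow (by positivity) (by exact_mod_cast G.minDegree_le_degree u) ha.le
  have hda_eq : ∀ u : V, (G.degree u : ℝ) ^ a = (G.minDegree : ℝ) ^ a →
      G.degree u = G.minDegree := by
    intro u h
    by_contra hne
    have hlt : (G.minDegree : ℝ) < (G.degree u : ℝ) := by
      have := G.minDegree_le_degree u
      exact_mod_cast lt_of_le_of_ne this (Ne.symm hne)
    have := Real.rpow_lt_rpow (by positivity) hlt ha
    linarith
  -- rewrite varZagreb1 as an edge sum
  have hz : varZagreb1 G (a + 1)
      = ∑ e ∈ G.edgeFinset,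
          Sym2.lift ⟨fun u v => (G.degree u : ℝ) ^ a + (G.degree v : ℝ) ^ a,
            fun u v => by simp [add_comm]⟩ e := by
    rw [edge_sum_add G (fun u => (G.degree u : ℝ) ^ a)]
    unfold varZagreb1
    refine Finset.sum_congr rfl fun u _ => ?_
    have hdu : (0 : ℝ) < (G.degree u : ℝ) := by exact_mod_cast hiso u
    rw [Real.rpow_add hdu, Real.rpow_one, mul_comm]
  -- combine into one edge sum
  set F : Sym2 V → ℝ := fun e =>
    Sym2.lift ⟨fun u v => 1 / ((G.degree u : ℝ) ^ a + (G.degree v : ℝ) ^ a),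
      fun u v => by simp [add_comm]⟩ e
      + Sym2.lift ⟨fun u v => (G.degree u : ℝ) ^ a + (G.degree v : ℝ) ^ a,
          fun u v => by simp [add_comm]⟩ e with hF
  have htot : ISD G a + varZagreb1 G (a + 1) = ∑ e ∈ G.edgeFinset, F e := by
    rw [hz]; unfold ISD; rw [← Finset.sum_add_distrib]
  -- per-edge bound and equality characterization
  have hedge : ∀ e ∈ G.edgeFinset, c + 1 / c ≤ F e := by
    intro e he
    induction e with
    | _ u v =>
      have hx : c ≤ (G.degree u : ℝ) ^ a + (G.degree v : ℝ) ^ a := by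
        have := hda u; have := hda v; simp only [hc]; linarith
      have := (xinv_mono hc1 hx).1
      simp only [hF, Sym2.lift_mk]
      linarith
  have heq : ∀ e ∈ G.edgeFinset, (c + 1 / c = F e ↔
      (∀ u ∈ e, G.degree u = G.minDegree)) := by
    intro e he
    induction e with
    | _ u v =>
      have hx : c ≤ (G.degree u : ℝ) ^ a + (G.degree v : ℝ) ^ a := by
        have := hda u; have := hda v; simp only [hc]; linarith
      have hiff := (xinv_mono hc1 hx).2
      constructor
      · intro h
        have hx_eq : (G.degree u : ℝ) ^ a + (G.degree v : ℝ) ^ a = c := by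
          apply hiff.mp
          simp only [hF, Sym2.lift_mk] at h
          linarith
        have hu : (G.degree u : ℝ) ^ a = (G.minDegree : ℝ) ^ a := by
          have := hda u; have := hda v; simp only [hc] at hx_eq; linarith
        have hv : (G.degree v : ℝ) ^ a = (G.minDegree : ℝ) ^ a := by
          have := hda u; have := hda v; simp only [hc] at hx_eq; linarith
        intro w hw
        rw [Sym2.mem_iff] at hw
        rcases hw with rfl | rfl
        · exact hda_eq _ hu
        · exact hda_eq _ hv
      · intro h
        have hu := h u (Sym2.mem_mk_left u v)
        have hv := h v (Sym2.mem_mk_right u v)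
        have hx_eq : (G.degree u : ℝ) ^ a + (G.degree v : ℝ) ^ a = c := by
          rw [hu, hv, hc]; ring
        have := hiff.mpr hx_eq
        simp only [hF, Sym2.lift_mk]
        linarith
  constructor
  · -- the inequality
    rw [htot, mul_comm]
    calc (G.edgeFinset.card : ℝ) * (c + 1 / c)
        = ∑ _e ∈ G.edgeFinset, (c + 1 / c) := by rw [Finset.sum_const, nsmul_eq_mul]
      _ ≤ ∑ e ∈ G.edgeFinset, F e := Finset.sum_le_sum hedge
  · -- the equality case
    have key : ISD G a + varZagreb1 G (a + 1) = c * (G.edgeFinset.card : ℝ)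
          + 1 / c * (G.edgeFinset.card : ℝ) ↔ ∀ e ∈ G.edgeFinset, c + 1 / c = F e := by
      rw [htot]
      rw [show c * (G.edgeFinset.card : ℝ) + 1 / c * (G.edgeFinset.card : ℝ)
          = ∑ _e ∈ G.edgeFinset, (c + 1 / c) by
        rw [Finset.sum_const, nsmul_eq_mul]; ring]
      rw [eq_comm]
      exact Finset.sum_eq_sum_iff_of_le hedge
    rw [show (2 * (G.minDegree : ℝ) ^ a + 1 / (2 * (G.minDegree : ℝ) ^ a))
        * (G.edgeFinset.card : ℝ)
        = c * (G.edgeFinset.card : ℝ) + 1 / c * (G.edgeFinset.card : ℝ) by rw [hc]; ring]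
    rw [key]
    constructor
    · intro h
      refine ⟨G.minDegree, fun v => ?_⟩
      have hw' : 0 < (G.neighborFinset v).card := by
        rw [SimpleGraph.card_neighborFinset_eq_degree]; exact hiso v
      obtain ⟨w, hw⟩ := Finset.card_pos.mp hw'
      rw [SimpleGraph.mem_neighborFinset] at hw
      have hmem : s(v, w) ∈ G.edgeFinset := by
        rw [SimpleGraph.mem_edgeFinset]; exact hw
      exact (heq _ hmem).mp (h _ hmem) v (Sym2.mem_mk_left v w)
    · rintro ⟨k, hk⟩ e he
      refine (heq e he).mpr fun u _ => ?_
      rw [hk u, hv₀, hk v₀]
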